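/- Let (ξ(t)) be an irreducible homogeneous random walk on ℤ with zero mean and finite variance. Set T₀ = inf{t ≥ 0 : ξ(t) ≤ 0} and T = inf{t ≥ 0 : ξ(t) = ξ(0) + 1}. Then lim_{n→∞} P_n(T < T₀) = 1. -/

import Mathlib

open scoped ENNReal Classical
open Filter
set_option linter.unusedSectionVars false
set_option maxHeartbeats 1000000

namespace KRWQ

/-- `n`-step transition probabilities of the homogeneous random walk with step
distribution `μ` on an abelian group `G`: `nstep μ n z z' = P_z(S(n) = z')`. -/
noncomputable def nstep {G : Type*} [AddCommGroup G] (μ : G → ℝ≥0∞) : ℕ → G → G → ℝ≥0∞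
  | 0, z, z' => if z' = z then 1 else 0
  | n + 1, z, z' => ∑' w : G, nstep μ n z w * μ (z' - w)

/-- `n`-step transition probabilities of the random walk killed outside the set `A`:
for `z ∈ A`, `nstepK μ A n z z' = P_z(S(n) = z', S(k) ∈ A for all k ≤ n)`. -/
noncomputable def nstepK {G : Type*} [AddCommGroup G] (μ : G → ℝ≥0∞) (A : Set G) :
    ℕ → G → G → ℝ≥0∞
  | 0, z, z' => if z' = z then 1 else 0
  | n + 1, z, z' => A.indicator (fun u => ∑' w : G, nstepK μ A n z w * μ (u - w)) z'

/-- Green function of the homogeneous random walk. -/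
noncomputable def green {G : Type*} [AddCommGroup G] (μ : G → ℝ≥0∞) (z z' : G) : ℝ≥0∞ :=
  ∑' n : ℕ, nstep μ n z z'

/-- Green function of the random walk killed outside `A`. -/
noncomputable def greenK {G : Type*} [AddCommGroup G] (μ : G → ℝ≥0∞) (A : Set G)
    (z z' : G) : ℝ≥0∞ :=
  ∑' n : ℕ, nstepK μ A n z z'

/-- Distribution of the exit position: for `z ∈ A`, `exitK μ A z w` is the probability
that the walk started at `z` first exits `A` (in finite time) at the point `w`,
i.e. `P_z(τ < ∞, S(τ) = w)` where `τ = inf{n ≥ 0 : S(n) ∉ A}`. -/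
noncomputable def exitK {G : Type*} [AddCommGroup G] (μ : G → ℝ≥0∞) (A : Set G)
    (z w : G) : ℝ≥0∞ :=
  Aᶜ.indicator (fun u => ∑' n : ℕ, ∑' v : G, nstepK μ A n z v * μ (u - v)) w

/-- `Eexit μ A z f = E_z(f(S(τ)); τ < ∞)` for a nonnegative `f`,
where `τ` is the first exit time from `A` and `z ∈ A`. -/
noncomputable def Eexit {G : Type*} [AddCommGroup G] (μ : G → ℝ≥0∞) (A : Set G) (z : G)
    (f : G → ℝ≥0∞) : ℝ≥0∞ :=
  ∑' w : G, exitK μ A z w * f w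

/-- `EexitR μ A z f = E_z(f(S(τ)); τ < ∞)` for a signed `f` (real-valued version). -/
noncomputable def EexitR {G : Type*} [AddCommGroup G] (μ : G → ℝ≥0∞) (A : Set G) (z : G)
    (f : G → ℝ) : ℝ :=
  ∑' w : G, (exitK μ A z w).toReal * f w

/-- Euclidean scalar product on `ℝ²`. -/
def dot (a b : ℝ × ℝ) : ℝ := a.1 * b.1 + a.2 * b.2

/-- Embedding of the lattice `ℤ²` into `ℝ²`. -/
def toR (z : ℤ × ℤ) : ℝ × ℝ := ((z.1 : ℝ), (z.2 : ℝ))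

/-- Euclidean norm on `ℝ²`. -/
noncomputable def norE (p : ℝ × ℝ) : ℝ := Real.sqrt (p.1 ^ 2 + p.2 ^ 2)

/-- Euclidean norm of a lattice point. -/
noncomputable def normZ (z : ℤ × ℤ) : ℝ := norE (toR z)

/-- The open quadrant `ℕ* × ℕ*`. -/
def quadrant : Set (ℤ × ℤ) := {z | 0 < z.1 ∧ 0 < z.2}

/-- The half plane `ℤ × ℕ*` (state space of the local process `Z¹₊`). -/
def upperHalf : Set (ℤ × ℤ) := {z | 0 < z.2}

/-- The half plane `ℕ* × ℤ` (state space of the local process `Z²₊`). -/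
def rightHalf : Set (ℤ × ℤ) := {z | 0 < z.1}

/-- The jump generating function `φ(a) = ∑_z μ(z) exp(a·z)`. -/
noncomputable def jumpGF (μ : ℤ × ℤ → ℝ≥0∞) (a : ℝ × ℝ) : ℝ≥0∞ :=
  ∑' z : ℤ × ℤ, μ z * ENNReal.ofReal (Real.exp (dot a (toR z)))

/-- Hypothesis (H1): the homogeneous random walk `S` with step distribution `μ`
is irreducible, and its mean `m = ∑_z z μ(z)` exists and is nonzero. -/
def H1 (μ : ℤ × ℤ → ℝ≥0∞) : Prop :=
  (∀ z z' : ℤ × ℤ, ∃ n : ℕ, 0 < nstep μ n z z') ∧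
    Summable (fun z : ℤ × ℤ => ((z.1 : ℝ)) * (μ z).toReal) ∧
    Summable (fun z : ℤ × ℤ => ((z.2 : ℝ)) * (μ z).toReal) ∧
    ((∑' z : ℤ × ℤ, ((z.1 : ℝ)) * (μ z).toReal, ∑' z : ℤ × ℤ, ((z.2 : ℝ)) * (μ z).toReal)
      ≠ ((0 : ℝ), (0 : ℝ)))

/-- Hypothesis (H2): the random walk killed outside the quadrant is irreducible
on the quadrant. -/
def H2 (μ : ℤ × ℤ → ℝ≥0∞) : Prop :=
  ∀ z ∈ quadrant, ∀ z' ∈ quadrant, ∃ n : ℕ, 0 < nstepK μ quadrant n z z'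

/-- Hypothesis (H3): the jump generating function is finite everywhere on `ℝ²`. -/
def H3 (μ : ℤ × ℤ → ℝ≥0∞) : Prop := ∀ a : ℝ × ℝ, jumpGF μ a < ⊤

/-- `d` is a greatest common divisor of the set `K` of natural numbers. -/
def IsGcdOfSet (K : Set ℕ) (d : ℕ) : Prop :=
  (∀ k ∈ K, d ∣ k) ∧ ∀ c : ℕ, (∀ k ∈ K, c ∣ k) → c ∣ d

/-- First marginal of `μ`: step distribution of the coordinate walk `S₁`. -/
noncomputable def marg1 (μ : ℤ × ℤ → ℝ≥0∞) : ℤ → ℝ≥0∞ := fun x => ∑' y : ℤ, μ (x, y)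

/-- Second marginal of `μ`: step distribution of the coordinate walk `S₂`. -/
noncomputable def marg2 (μ : ℤ × ℤ → ℝ≥0∞) : ℤ → ℝ≥0∞ := fun y => ∑' x : ℤ, μ (x, y)

/-- Hypothesis (H4): the coordinate random walks `S₁` and `S₂` are aperiodic on `ℤ`. -/
def H4 (μ : ℤ × ℤ → ℝ≥0∞) : Prop :=
  IsGcdOfSet {k : ℕ | 0 < k ∧ 0 < nstep (marg1 μ) k (0 : ℤ) 0} 1 ∧
    IsGcdOfSet {k : ℕ | 0 < k ∧ 0 < nstep (marg2 μ) k (0 : ℤ) 0} 1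

/-- The set `𝒮²₊` of unit vectors of `ℝ²` with nonnegative coordinates. -/
def Spos : Set (ℝ × ℝ) := {q | 0 ≤ q.1 ∧ 0 ≤ q.2 ∧ norE q = 1}

/-- `aOf` is the map `q ↦ a(q)`, the inverse of the homeomorphism
`a ↦ ∇φ(a)/|∇φ(a)|` from `∂D` onto the unit circle (extended to all nonzero `q` by
homogeneity).  Equivalently, `a(q)` is the unique point of `D = {a : φ(a) ≤ 1}` where
the linear functional `a ↦ a·q` attains its maximum over `D`, and it lies on `∂D`. -/
def IsDirMap (μ : ℤ × ℤ → ℝ≥0∞) (aOf : ℝ × ℝ → ℝ × ℝ) : Prop :=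
  ∀ q : ℝ × ℝ, q ≠ 0 →
    jumpGF μ (aOf q) = 1 ∧
      ∀ a : ℝ × ℝ, jumpGF μ a ≤ 1 → a ≠ aOf q → dot a q < dot (aOf q) q

/-- The arc `Γ₊ = {a ∈ ∂D : q(a) ∈ 𝒮²₊}`. -/
def GammaPlus (aOf : ℝ × ℝ → ℝ × ℝ) : Set (ℝ × ℝ) := {a | ∃ q ∈ Spos, a = aOf q}

/-- The integrand appearing in the boundary term of `h_a`. -/
noncomputable def haIntegrand (aOf : ℝ × ℝ → ℝ × ℝ) (a : ℝ × ℝ) (w : ℤ × ℤ) : ℝ :=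
  if a = aOf ((0 : ℝ), (1 : ℝ)) then (w.1 : ℝ) * Real.exp (dot a (toR w))
  else if a = aOf ((1 : ℝ), (0 : ℝ)) then (w.2 : ℝ) * Real.exp (dot a (toR w))
  else Real.exp (dot a (toR w))

/-- The leading term of `h_a`. -/
noncomputable def haLead (aOf : ℝ × ℝ → ℝ × ℝ) (a : ℝ × ℝ) (z : ℤ × ℤ) : ℝ :=
  if a = aOf ((0 : ℝ), (1 : ℝ)) then (z.1 : ℝ) * Real.exp (dot a (toR z))
  else if a = aOf ((1 : ℝ), (0 : ℝ)) then (z.2 : ℝ) * Real.exp (dot a (toR z))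
  else Real.exp (dot a (toR z))

/-- The harmonic function `h_a` of the killed random walk, defined by (1.3). -/
noncomputable def haFun (μ : ℤ × ℤ → ℝ≥0∞) (aOf : ℝ × ℝ → ℝ × ℝ) (a : ℝ × ℝ)
    (z : ℤ × ℤ) : ℝ :=
  haLead aOf a z - EexitR μ quadrant z (haIntegrand aOf a)

/-- Expectation over the event `{τ = τ₁ < τ₂}`, i.e. the walk exits the quadrant
through the boundary `{w : w₁ ≤ 0, w₂ > 0}`. -/
noncomputable def Eexit1 (μ : ℤ × ℤ → ℝ≥0∞) (z : ℤ × ℤ) (f : ℤ × ℤ → ℝ≥0∞) : ℝ≥0∞ :=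
  ∑' w : ℤ × ℤ, (if w.1 ≤ 0 ∧ 0 < w.2 then exitK μ quadrant z w * f w else 0)

/-- The support function `w ↦ a(w)·w = max_{a ∈ D} a·w`, with the convention that it
vanishes at `w = 0`. -/
noncomputable def support (aOf : ℝ × ℝ → ℝ × ℝ) (w : ℝ × ℝ) : ℝ :=
  if w = 0 then 0 else dot (aOf w) w

/-- The function `λ_ε(q,w) = a(w)·w + a(q-w)·(q-w) - ε|w|`. -/
noncomputable def lamEps (aOf : ℝ × ℝ → ℝ × ℝ) (ε : ℝ) (q w : ℝ × ℝ) : ℝ :=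
  support aOf w + support aOf (q - w) - ε * norE w

/-- The principal part `Ξ^q_δ(z,zₙ)` of the renewal equation. -/
noncomputable def XiQ (μ : ℤ × ℤ → ℝ≥0∞) (q : ℝ × ℝ) (δ : ℝ) (z zn : ℤ × ℤ) : ℝ :=
  if q = ((1 : ℝ), (0 : ℝ)) then
    (greenK μ upperHalf z zn).toReal -
      ∑' w : ℤ × ℤ, (exitK μ quadrant z w).toReal *
        (if w.1 ≤ 0 ∧ 0 < w.2 ∧ normZ w < δ * normZ zn then
          (greenK μ upperHalf w zn).toReal else 0)
  else if q = ((0 : ℝ), (1 : ℝ)) then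
    (greenK μ rightHalf z zn).toReal -
      ∑' w : ℤ × ℤ, (exitK μ quadrant z w).toReal *
        (if w.2 ≤ 0 ∧ 0 < w.1 ∧ normZ w < δ * normZ zn then
          (greenK μ rightHalf w zn).toReal else 0)
  else
    (green μ z zn).toReal -
      ∑' w : ℤ × ℤ, (exitK μ quadrant z w).toReal *
        (if normZ w < δ * normZ zn then (green μ w zn).toReal else 0)


section Aux
variable {G : Type*} [AddCommGroup G] (μ : G → ℝ≥0∞) (A B : Set G)

/-- monotone convergence for tsum -/
theorem tsum_iSup_mono {α : Type*} (f : ℕ → α → ℝ≥0∞) (hf : Monotone f) :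
    ∑' a, ⨆ n, f n a = ⨆ n, ∑' a, f n a := by
  classical
  letI : MeasurableSpace α := ⊤
  haveI : MeasurableSingletonClass α := ⟨fun a => trivial⟩
  rw [← MeasureTheory.lintegral_count]
  rw [MeasureTheory.lintegral_iSup (fun n => measurable_from_top) hf]
  simp [MeasureTheory.lintegral_count]

theorem nstep_eq_nstepK_univ (n : ℕ) (z z' : G) :
    nstep μ n z z' = nstepK μ Set.univ n z z' := by
  induction n generalizing z' with
  | zero => rfl
  | succ n ih => simp [nstep, nstepK, ih]

theorem nstepK_zero (z z' : G) : nstepK μ A 0 z z' = if z' = z then 1 else 0 := rfl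

theorem nstepK_succ (n : ℕ) (z z' : G) :
    nstepK μ A (n+1) z z' =
      A.indicator (fun u => ∑' w : G, nstepK μ A n z w * μ (u - w)) z' := rfl

theorem nstepK_one (z z' : G) :
    nstepK μ A 1 z z' = A.indicator (fun u => μ (u - z)) z' := by
  rw [nstepK_succ]
  congr 1
  ext u
  rw [tsum_eq_single z]
  · simp [nstepK_zero]
  · intro w hw; simp [nstepK_zero, hw]

/-- semigroup property -/
theorem nstepK_add (m n : ℕ) (z z' : G) :
    nstepK μ A (m + n) z z' = ∑' v : G, nstepK μ A m z v * nstepK μ A n v z' := by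
  induction n generalizing z' with
  | zero =>
      rw [Nat.add_zero, tsum_eq_single z']
      · simp [nstepK_zero]
      · intro w hw; simp [nstepK_zero, Ne.symm hw]
  | succ n ih =>
      rw [show m + (n+1) = (m + n) + 1 by ring]
      simp only [nstepK_succ]
      rcases Classical.em (z' ∈ A) with h | h
      · rw [Set.indicator_of_mem h]
        calc ∑' w : G, nstepK μ A (m+n) z w * μ (z' - w)
            = ∑' w : G, (∑' v : G, nstepK μ A m z v * nstepK μ A n v w) * μ (z' - w) := by
              simp_rw [ih]
          _ = ∑' w : G, ∑' v : G, nstepK μ A m z v * (nstepK μ A n v w * μ (z' - w)) := by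
              congr 1; ext w
              rw [← ENNReal.tsum_mul_right]
              congr 1; ext v; ring
          _ = ∑' v : G, ∑' w : G, nstepK μ A m z v * (nstepK μ A n v w * μ (z' - w)) :=
              ENNReal.tsum_comm
          _ = ∑' v : G, nstepK μ A m z v * ∑' w : G, nstepK μ A n v w * μ (z' - w) := by
              congr 1; ext v
              rw [ENNReal.tsum_mul_left]
          _ = ∑' v : G, nstepK μ A m z v *
                Set.indicator A (fun u => ∑' w : G, nstepK μ A n v w * μ (u - w)) z' := by
              congr 1; ext v; rw [Set.indicator_of_mem h]
      · rw [Set.indicator_of_notMem h]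
        symm
        simp only [Set.indicator_of_notMem h, mul_zero]
        exact tsum_zero

theorem nstepK_succ_left (n : ℕ) (z z' : G) :
    nstepK μ A (n+1) z z' =
      ∑' w : G, A.indicator (fun u => μ (u - z)) w * nstepK μ A n w z' := by
  rw [show n + 1 = 1 + n by ring, nstepK_add]
  simp_rw [nstepK_one]

theorem nstepK_mono_set (h : A ⊆ B) (n : ℕ) (z z' : G) :
    nstepK μ A n z z' ≤ nstepK μ B n z z' := by
  induction n generalizing z' with
  | zero => simp [nstepK_zero]
  | succ n ih =>
      rw [nstepK_succ, nstepK_succ]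
      rcases Classical.em (z' ∈ A) with hz | hz
      · rw [Set.indicator_of_mem hz, Set.indicator_of_mem (h hz)]
        exact ENNReal.tsum_le_tsum fun w => mul_le_mul_left (ih w) _
      · simp [Set.indicator_of_notMem hz]


/-- translation invariance -/
theorem nstepK_translate (c : G) (n : ℕ) (z z' : G) :
    nstepK μ ((fun x => x + c) '' A) n (z + c) (z' + c) = nstepK μ A n z z' := by
  induction n generalizing z' with
  | zero =>
      simp only [nstepK_zero]
      congr 1
      simp [add_left_inj]
  | succ n ih =>
      simp only [nstepK_succ]
      have hmem : z' + c ∈ (fun x => x + c) '' A ↔ z' ∈ A := by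
        constructor
        · rintro ⟨y, hy, hyy⟩
          have : y = z' := by
            have := add_right_cancel hyy
            exact this
          rwa [← this]
        · intro h; exact ⟨z', h, rfl⟩
      rcases Classical.em (z' ∈ A) with h | h
      · rw [Set.indicator_of_mem (hmem.2 h), Set.indicator_of_mem h]
        rw [← (Equiv.addRight c).tsum_eq]
        congr 1; ext w
        simp only [Equiv.coe_addRight]
        rw [ih]
        congr 2
        abel
      · rw [Set.indicator_of_notMem (fun hc => h (hmem.1 hc)),
          Set.indicator_of_notMem h]

theorem exitK_translate (c : G) (z w : G) :
    exitK μ ((fun x => x + c) '' A) (z + c) (w + c) = exitK μ A z w := by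
  unfold exitK
  have hmem : w + c ∈ ((fun x => x + c) '' A)ᶜ ↔ w ∈ Aᶜ := by
    simp only [Set.mem_compl_iff, not_iff_not]
    constructor
    · rintro ⟨y, hy, hyy⟩; rwa [← add_right_cancel hyy]
    · intro h; exact ⟨w, h, rfl⟩
  rcases Classical.em (w ∈ Aᶜ) with h | h
  · rw [Set.indicator_of_mem (hmem.2 h), Set.indicator_of_mem h]
    congr 1; ext n
    rw [← (Equiv.addRight c).tsum_eq]
    congr 1; ext v
    simp only [Equiv.coe_addRight]
    rw [nstepK_translate]
    congr 2
    abel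
  · rw [Set.indicator_of_notMem (fun hc => h (hmem.1 hc)), Set.indicator_of_notMem h]


section Mass
variable (hprob : ∑' x : G, μ x = 1)
include hprob

theorem tsum_mu_sub (v : G) : ∑' u : G, μ (u - v) = 1 := by
  rw [← hprob, ← (Equiv.addRight v).tsum_eq (fun u => μ (u - v))]
  simp

/-- total exit mass at time m+1 -/
noncomputable def exitStep (m : ℕ) (z : G) : ℝ≥0∞ :=
  ∑' u : G, Aᶜ.indicator (fun u => ∑' v : G, nstepK μ A m z v * μ (u - v)) u

/-- mass still alive at time n -/
noncomputable def massK (n : ℕ) (z : G) : ℝ≥0∞ := ∑' v : G, nstepK μ A n z v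

omit hprob in
theorem massK_zero (z : G) : massK μ A 0 z = 1 := by
  unfold massK
  rw [tsum_eq_single z]
  · simp [nstepK_zero]
  · intro v hv; simp [nstepK_zero, hv]

theorem massK_succ_add (n : ℕ) (z : G) :
    massK μ A (n+1) z + exitStep μ A n z = massK μ A n z := by
  have key : massK μ A n z
      = ∑' u : G, (fun u => ∑' v : G, nstepK μ A n z v * μ (u - v)) u := by
    rw [ENNReal.tsum_comm]
    unfold massK
    congr 1; ext v
    rw [ENNReal.tsum_mul_left, tsum_mu_sub μ hprob, mul_one]
  rw [key]
  symm
  have split : ∀ u : G, (fun u => ∑' v : G, nstepK μ A n z v * μ (u - v)) u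
      = A.indicator (fun u => ∑' v : G, nstepK μ A n z v * μ (u - v)) u
        + Aᶜ.indicator (fun u => ∑' v : G, nstepK μ A n z v * μ (u - v)) u := by
    intro u
    exact (congrFun (Set.indicator_self_add_compl A (fun u => ∑' v : G, nstepK μ A n z v * μ (u - v))) u).symm
  calc ∑' u : G, (fun u => ∑' v : G, nstepK μ A n z v * μ (u - v)) u
      = ∑' u : G, (A.indicator (fun u => ∑' v : G, nstepK μ A n z v * μ (u - v)) u
        + Aᶜ.indicator (fun u => ∑' v : G, nstepK μ A n z v * μ (u - v)) u) := by
        exact tsum_congr split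
    _ = massK μ A (n+1) z + exitStep μ A n z := by
        rw [ENNReal.tsum_add]; rfl

theorem massK_add_exit (n : ℕ) (z : G) :
    massK μ A n z + ∑ k ∈ Finset.range n, exitStep μ A k z = 1 := by
  induction n with
  | zero => simp [massK_zero]
  | succ n ih =>
      rw [Finset.sum_range_succ, ← ih, ← massK_succ_add μ A hprob n z]
      ring

theorem massK_le_one (n : ℕ) (z : G) : massK μ A n z ≤ 1 :=
  le_of_le_of_eq (le_add_right le_rfl) (massK_add_exit μ A hprob n z)

theorem nstepK_le_one (n : ℕ) (z v : G) : nstepK μ A n z v ≤ 1 :=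
  le_trans (ENNReal.le_tsum v) (massK_le_one μ A hprob n z)

theorem sum_exitStep_le_one (z : G) : ∑' k : ℕ, exitStep μ A k z ≤ 1 := by
  rw [ENNReal.tsum_eq_iSup_nat]
  apply iSup_le
  intro n
  exact le_of_le_of_eq (le_add_left le_rfl) (massK_add_exit μ A hprob n z)

omit hprob in
theorem tsum_exitK_eq (z : G) :
    ∑' w : G, exitK μ A z w = ∑' k : ℕ, exitStep μ A k z := by
  unfold exitK exitStep
  rw [ENNReal.tsum_comm]
  congr 1; ext w
  rcases Classical.em (w ∈ Aᶜ) with h | h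
  · simp only [Set.indicator_of_mem h]
  · simp only [Set.indicator_of_notMem h, tsum_zero]

theorem exitK_le_one (z w : G) : exitK μ A z w ≤ 1 :=
  le_trans (ENNReal.le_tsum w)
    (le_trans (le_of_eq (tsum_exitK_eq μ A z)) (sum_exitStep_le_one μ A hprob z))

end Mass


section FirstPassage
variable (hprob : ∑' x : G, μ x = 1)

/-- probability of exiting A at time m+1 at the point u -/
noncomputable def exitAt (m : ℕ) (z u : G) : ℝ≥0∞ :=
  Aᶜ.indicator (fun u => ∑' v : G, nstepK μ A m z v * μ (u - v)) u

theorem exitStep_eq (m : ℕ) (z : G) : exitStep μ A m z = ∑' u : G, exitAt μ A m z u := rfl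

theorem exitK_eq_tsum_exitAt (z w : G) : exitK μ A z w = ∑' m : ℕ, exitAt μ A m z w := by
  unfold exitK exitAt
  rcases Classical.em (w ∈ Aᶜ) with h | h
  · simp only [Set.indicator_of_mem h]
  · simp only [Set.indicator_of_notMem h, tsum_zero]

theorem exitAt_add (n k : ℕ) (z u : G) :
    exitAt μ A (n + k) z u = ∑' w : G, nstepK μ A n z w * exitAt μ A k w u := by
  unfold exitAt
  rcases Classical.em (u ∈ Aᶜ) with h | h
  · simp only [Set.indicator_of_mem h]
    calc ∑' v : G, nstepK μ A (n+k) z v * μ (u - v)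
        = ∑' v : G, (∑' w : G, nstepK μ A n z w * nstepK μ A k w v) * μ (u - v) := by
          simp_rw [nstepK_add]
      _ = ∑' v : G, ∑' w : G, nstepK μ A n z w * (nstepK μ A k w v * μ (u - v)) := by
          congr 1; ext v
          rw [← ENNReal.tsum_mul_right]
          congr 1; ext w; ring
      _ = ∑' w : G, ∑' v : G, nstepK μ A n z w * (nstepK μ A k w v * μ (u - v)) :=
          ENNReal.tsum_comm
      _ = ∑' w : G, nstepK μ A n z w * ∑' v : G, nstepK μ A k w v * μ (u - v) := by
          congr 1; ext w; rw [ENNReal.tsum_mul_left]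
  · simp only [Set.indicator_of_notMem h, mul_zero, tsum_zero]

theorem exitAt_succ_left (m : ℕ) (z u : G) :
    exitAt μ A (m + 1) z u
      = ∑' w : G, A.indicator (fun w => μ (w - z)) w * exitAt μ A m w u := by
  rw [show m + 1 = 1 + m by ring, exitAt_add]
  congr 1; ext w
  rw [nstepK_one]

theorem exitAt_zero (z u : G) :
    exitAt μ A 0 z u = Aᶜ.indicator (fun u => μ (u - z)) u := by
  unfold exitAt
  congr 1
  ext u
  rw [tsum_eq_single z]
  · simp [nstepK_zero]
  · intro v hv; simp [nstepK_zero, hv]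

theorem exitAt_push (m : ℕ) (z : G) (p : G → ℝ≥0∞) :
    ∑' w : G, A.indicator (fun w => μ (w - z)) w * ∑' u : G, exitAt μ A m w u * p u
      = ∑' u : G, exitAt μ A (m + 1) z u * p u := by
  calc ∑' w : G, A.indicator (fun w => μ (w - z)) w * ∑' u : G, exitAt μ A m w u * p u
      = ∑' w : G, ∑' u : G, A.indicator (fun w => μ (w - z)) w * (exitAt μ A m w u * p u) := by
        congr 1; ext w; rw [ENNReal.tsum_mul_left]
    _ = ∑' u : G, ∑' w : G, A.indicator (fun w => μ (w - z)) w * (exitAt μ A m w u * p u) :=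
        ENNReal.tsum_comm
    _ = ∑' u : G, (∑' w : G, A.indicator (fun w => μ (w - z)) w * exitAt μ A m w u) * p u := by
        congr 1; ext u
        rw [← ENNReal.tsum_mul_right]
        congr 1; ext w; ring
    _ = ∑' u : G, exitAt μ A (m + 1) z u * p u := by
        congr 1; ext u
        rw [← exitAt_succ_left]

theorem nstep_succ_left (n : ℕ) (z z' : G) :
    nstep μ (n+1) z z' = ∑' w : G, μ (w - z) * nstep μ n w z' := by
  simp only [nstep_eq_nstepK_univ]
  rw [nstepK_succ_left]
  simp

/-- first passage decomposition (inequality) -/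
theorem nstep_le_fp (n : ℕ) (z z' : G) :
    nstep μ n z z' ≤ nstepK μ A n z z'
      + ∑ m ∈ Finset.range n, ∑' u : G, exitAt μ A m z u * nstep μ (n - 1 - m) u z' := by
  induction n generalizing z with
  | zero => simp [nstep, nstepK_zero]
  | succ n ih =>
      rw [nstep_succ_left]
      have hsplit : ∀ w : G, μ (w - z) * nstep μ n w z'
          = A.indicator (fun w => μ (w - z)) w * nstep μ n w z'
            + Aᶜ.indicator (fun w => μ (w - z)) w * nstep μ n w z' := by
        intro w
        rw [← add_mul]
        congr 1
        exact (congrFun (Set.indicator_self_add_compl A (fun w => μ (w - z))) w).symm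
      calc ∑' w : G, μ (w - z) * nstep μ n w z'
          = ∑' w : G, A.indicator (fun w => μ (w - z)) w * nstep μ n w z'
            + ∑' w : G, Aᶜ.indicator (fun w => μ (w - z)) w * nstep μ n w z' := by
            rw [← ENNReal.tsum_add]; exact tsum_congr hsplit
        _ ≤ (nstepK μ A (n+1) z z'
              + ∑ m ∈ Finset.range n, ∑' u : G, exitAt μ A (m+1) z u * nstep μ (n - 1 - m) u z')
            + ∑' w : G, Aᶜ.indicator (fun w => μ (w - z)) w * nstep μ n w z' := by
            apply add_le_add_left
            calc ∑' w : G, A.indicator (fun w => μ (w - z)) w * nstep μ n w z'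
                ≤ ∑' w : G, A.indicator (fun w => μ (w - z)) w *
                    (nstepK μ A n w z'
                      + ∑ m ∈ Finset.range n, ∑' u : G, exitAt μ A m w u * nstep μ (n-1-m) u z') :=
                  ENNReal.tsum_le_tsum fun w => mul_le_mul_right (ih w) _
              _ = ∑' w : G, A.indicator (fun w => μ (w - z)) w * nstepK μ A n w z'
                  + ∑' w : G, A.indicator (fun w => μ (w - z)) w *
                      ∑ m ∈ Finset.range n, ∑' u : G, exitAt μ A m w u * nstep μ (n-1-m) u z' := by
                  rw [← ENNReal.tsum_add]
                  congr 1; ext w; rw [mul_add]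
              _ = nstepK μ A (n+1) z z'
                  + ∑ m ∈ Finset.range n, ∑' u : G, exitAt μ A (m+1) z u * nstep μ (n-1-m) u z' := by
                  congr 1
                  · rw [nstepK_succ_left]
                  · calc ∑' w : G, A.indicator (fun w => μ (w - z)) w *
                          ∑ m ∈ Finset.range n, ∑' u : G, exitAt μ A m w u * nstep μ (n-1-m) u z'
                        = ∑' w : G, ∑ m ∈ Finset.range n, A.indicator (fun w => μ (w - z)) w *
                            ∑' u : G, exitAt μ A m w u * nstep μ (n-1-m) u z' := by
                          congr 1; ext w; rw [Finset.mul_sum]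
                      _ = ∑ m ∈ Finset.range n, ∑' w : G, A.indicator (fun w => μ (w - z)) w *
                            ∑' u : G, exitAt μ A m w u * nstep μ (n-1-m) u z' :=
                          Summable.tsum_finsetSum (fun m _ => ENNReal.summable)
                      _ = ∑ m ∈ Finset.range n,
                            ∑' u : G, exitAt μ A (m+1) z u * nstep μ (n-1-m) u z' := by
                          exact Finset.sum_congr rfl fun m _ => exitAt_push μ A m z _
        _ = nstepK μ A (n+1) z z'
              + ∑ m ∈ Finset.range (n+1), ∑' u : G, exitAt μ A m z u * nstep μ (n - m) u z' := by
            rw [Finset.sum_range_succ']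
            have h0 : ∑' u : G, exitAt μ A 0 z u * nstep μ (n - 0) u z'
                = ∑' w : G, Aᶜ.indicator (fun w => μ (w - z)) w * nstep μ n w z' := by
              simp only [Nat.sub_zero]
              congr 1; ext u
              rw [exitAt_zero]
            rw [h0]
            have h2 : ∑ i ∈ Finset.range n,
                ∑' u : G, exitAt μ A (i+1) z u * nstep μ (n - (i + 1)) u z'
                = ∑ m ∈ Finset.range n,
                    ∑' u : G, exitAt μ A (m+1) z u * nstep μ (n - 1 - m) u z' := by
              refine Finset.sum_congr rfl fun i _ => ?_
              rw [show n - (i+1) = n - 1 - i by omega]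
            rw [h2, add_assoc]

end FirstPassage


section Paths

theorem nstep_pos_path {n : ℕ} {z z' : G} (h : 0 < nstep μ n z z') :
    ∃ f : ℕ → G, f 0 = z ∧ f n = z' ∧ ∀ i < n, 0 < μ (f (i+1) - f i) := by
  induction n generalizing z' with
  | zero =>
      have : z' = z := by
        by_contra hc
        simp [nstep, hc] at h
      exact ⟨fun _ => z, rfl, by simp [this], by intro i hi; omega⟩
  | succ n ih =>
      have : ∃ w : G, 0 < nstep μ n z w * μ (z' - w) := by
        by_contra hc
        push_neg at hc
        simp only [nonpos_iff_eq_zero] at hc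
        have : nstep μ (n+1) z z' = 0 := by
          show (∑' w : G, nstep μ n z w * μ (z' - w)) = 0
          exact ENNReal.tsum_eq_zero.2 hc
        rw [this] at h
        exact lt_irrefl 0 h
      obtain ⟨w, hw⟩ := this
      have h1 : 0 < nstep μ n z w := by
        rcases eq_or_lt_of_le (zero_le : 0 ≤ nstep μ n z w) with he | hl
        · rw [← he, zero_mul] at hw; exact absurd hw (lt_irrefl 0)
        · exact hl
      have h2 : 0 < μ (z' - w) := by
        rcases eq_or_lt_of_le (zero_le : 0 ≤ μ (z' - w)) with he | hl
        · rw [← he, mul_zero] at hw; exact absurd hw (lt_irrefl 0)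
        · exact hl
      obtain ⟨f, hf0, hfn, hstep⟩ := ih h1
      refine ⟨fun i => if i ≤ n then f i else z', by simp [hf0], by simp, ?_⟩
      intro i hi
      rcases Nat.lt_or_ge i n with hin | hin
      · simpa [Nat.le_of_lt hin, Nat.succ_le_of_lt hin] using hstep i hin
      · have hieq : i = n := by omega
        subst hieq
        simpa [hfn] using h2

theorem path_nstepK_pos {n : ℕ} (f : ℕ → G)
    (hA : ∀ i, 1 ≤ i → i ≤ n → f i ∈ A)
    (hstep : ∀ i < n, 0 < μ (f (i+1) - f i)) :
    0 < nstepK μ A n (f 0) (f n) := by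
  induction n with
  | zero => simp [nstepK_zero]
  | succ n ih =>
      have hfn1 : f (n+1) ∈ A := hA (n+1) (by omega) le_rfl
      rw [nstepK_succ, Set.indicator_of_mem hfn1]
      have hterm : 0 < nstepK μ A n (f 0) (f n) * μ (f (n+1) - f n) := by
        refine ENNReal.mul_pos ?_ ?_
        · exact ne_of_gt (ih (fun i h1 h2 => hA i h1 (by omega)) (fun i hi => hstep i (by omega)))
        · exact ne_of_gt (hstep n (by omega))
      exact lt_of_lt_of_le hterm (ENNReal.le_tsum (f n))

theorem path_avoid {x : G} (hx : x ≠ 0) :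
    ∀ n : ℕ, ∀ f : ℕ → G, f 0 = 0 → f n = x → (∀ i < n, 0 < μ (f (i+1) - f i)) →
      ∃ m : ℕ, ∃ g : ℕ → G, g 0 = 0 ∧ g m = x ∧ (∀ i, 1 ≤ i → i ≤ m → g i ≠ 0) ∧
        (∀ i < m, 0 < μ (g (i+1) - g i)) := by
  intro n
  induction n using Nat.strong_induction_on with
  | _ n ih =>
      intro f hf0 hfn hstep
      rcases Classical.em (∀ i, 1 ≤ i → i ≤ n → f i ≠ 0) with h | h
      · exact ⟨n, f, hf0, hfn, h, hstep⟩
      · push_neg at h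
        obtain ⟨j, hj1, hjn, hj0⟩ := h
        have hjn' : j < n := by
          rcases eq_or_lt_of_le hjn with he | hl
          · exfalso; apply hx; rw [← hfn, ← he, hj0]
          · exact hl
        refine ih (n - j) (by omega) (fun i => f (j + i)) (by simpa using hj0)
          (by show f (j + (n - j)) = x; rw [show j + (n - j) = n by omega]; exact hfn) ?_
        intro i hi
        have := hstep (j + i) (by omega)
        simpa [show j + i + 1 = j + (i+1) by ring] using this

theorem hit_pos (hirr : ∀ z z' : G, ∃ n : ℕ, 0 < nstep μ n z z') {x : G} (hx : x ≠ 0) :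
    ∃ m : ℕ, 0 < nstepK μ ({0}ᶜ : Set G) m 0 x := by
  obtain ⟨n, hn⟩ := hirr 0 x
  obtain ⟨f, hf0, hfn, hstep⟩ := nstep_pos_path μ hn
  obtain ⟨m, g, hg0, hgm, hgA, hgstep⟩ := path_avoid μ hx n f hf0 hfn hstep
  refine ⟨m, ?_⟩
  have := path_nstepK_pos μ ({0}ᶜ : Set G) g (fun i h1 h2 => hgA i h1 h2) hgstep
  rwa [hg0, hgm] at this

end Paths


section Renewal

theorem sum_conv_le (a b : ℕ → ℝ≥0∞) (K : ℕ) :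
    ∑ n ∈ Finset.range K, ∑ m ∈ Finset.range (n+1), a m * b (n - m)
      ≤ (∑ m ∈ Finset.range K, a m) * (∑ j ∈ Finset.range K, b j) := by
  rw [Finset.sum_mul_sum]
  have step1 : ∑ n ∈ Finset.range K, ∑ m ∈ Finset.range (n+1), a m * b (n - m)
      = ∑ n ∈ Finset.range K, ∑ p ∈ Finset.HasAntidiagonal.antidiagonal n, a p.1 * b p.2 := by
    refine Finset.sum_congr rfl fun n _ => ?_
    rw [Finset.Nat.sum_antidiagonal_eq_sum_range_succ_mk]
  rw [step1, ← Finset.sum_biUnion, ← Finset.sum_product']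
  · apply Finset.sum_le_sum_of_subset
    intro p hp
    simp only [Finset.mem_biUnion, Finset.mem_range, Finset.HasAntidiagonal.mem_antidiagonal] at hp
    obtain ⟨n, hn, hpn⟩ := hp
    simp only [Finset.mem_product, Finset.mem_range]
    omega
  · intro n hn n' hn' hne
    simp only [Function.onFun, Finset.disjoint_left]
    intro p hp hp'
    simp only [Finset.HasAntidiagonal.mem_antidiagonal] at hp hp'
    exact hne (by omega)

variable (hprob : ∑' x : G, μ x = 1)
include hprob

theorem nstep_le_one (n : ℕ) (z z' : G) : nstep μ n z z' ≤ 1 := by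
  rw [nstep_eq_nstepK_univ]
  exact nstepK_le_one μ Set.univ hprob n z z'

omit hprob in
theorem nstepK_compl_self (n : ℕ) (z : G) (p : G) :
    nstepK μ ({p}ᶜ : Set G) (n+1) z p = 0 := by
  rw [nstepK_succ, Set.indicator_of_notMem (by simp)]

omit hprob in
theorem exitStep_eq_exitAt_pt (p : G) (m : ℕ) (z : G) :
    exitStep μ ({p}ᶜ : Set G) m z = exitAt μ ({p}ᶜ : Set G) m z p := by
  rw [exitStep_eq]
  rw [tsum_eq_single p]
  intro u hu
  unfold exitAt
  apply Set.indicator_of_notMem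
  simpa using hu

omit hprob in
theorem exitStep_eq_exitAt_zero (m : ℕ) (z : G) :
    exitStep μ ({0}ᶜ : Set G) m z = exitAt μ ({0}ᶜ : Set G) m z 0 :=
  exitStep_eq_exitAt_pt μ 0 m z

theorem nstep_translate (c : G) (n : ℕ) (z z' : G) :
    nstep μ n (z + c) (z' + c) = nstep μ n z z' := by
  have himg : (fun x => x + c) '' (Set.univ : Set G) = Set.univ := by
    rw [Set.image_univ]
    exact (Equiv.addRight c).surjective.range_eq
  rw [nstep_eq_nstepK_univ, nstep_eq_nstepK_univ]
  calc nstepK μ Set.univ n (z + c) (z' + c)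
      = nstepK μ ((fun x => x + c) '' Set.univ) n (z + c) (z' + c) := by rw [himg]
    _ = nstepK μ Set.univ n z z' := nstepK_translate μ Set.univ c n z z'

omit hprob in
theorem sum_conv_le' (a b : ℕ → ℝ≥0∞) (K : ℕ) :
    ∑ n ∈ Finset.range K, ∑ m ∈ Finset.range n, a m * b (n - 1 - m)
      ≤ (∑ m ∈ Finset.range K, a m) * (∑ j ∈ Finset.range K, b j) := by
  rcases K with _ | K
  · simp
  · rw [Finset.sum_range_succ']
    simp only [Finset.range_zero, Finset.sum_empty, add_zero]
    have h1 : ∀ i ∈ Finset.range K, ∑ m ∈ Finset.range (i+1), a m * b (i + 1 - 1 - m)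
        = ∑ m ∈ Finset.range (i+1), a m * b (i - m) := by
      intro i _
      exact Finset.sum_congr rfl fun m _ => by rw [show i + 1 - 1 - m = i - m by omega]
    rw [Finset.sum_congr rfl h1]
    refine le_trans (sum_conv_le a b K) (mul_le_mul' ?_ ?_) <;>
      exact Finset.sum_le_sum_of_subset (Finset.range_subset_range.2 (by omega))

theorem green_le_green_zero (x : G) :
    (∑' n : ℕ, nstep μ n 0 x) ≤ ∑' n : ℕ, nstep μ n (0:G) 0 := by
  rcases Classical.em (x = 0) with rfl | hx
  · exact le_rfl
  have hfx : ∀ n : ℕ, nstep μ n 0 x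
      ≤ ∑ m ∈ Finset.range n, exitAt μ ({x}ᶜ : Set G) m 0 x * nstep μ (n - 1 - m) x x := by
    intro n
    have h := nstep_le_fp μ ({x}ᶜ : Set G) n 0 x
    have hzero : nstepK μ ({x}ᶜ : Set G) n 0 x = 0 := by
      cases n with
      | zero => simp [nstepK_zero, hx]
      | succ n => exact nstepK_compl_self μ n 0 x
    rw [hzero, zero_add] at h
    refine le_trans h (le_of_eq ?_)
    refine Finset.sum_congr rfl fun m hm => ?_
    rw [tsum_eq_single x]
    intro u hu
    have hz : exitAt μ ({x}ᶜ : Set G) m 0 u = 0 :=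
      Set.indicator_of_notMem (by simpa using hu) _
    rw [hz, zero_mul]
  have hK : ∀ K : ℕ, ∑ n ∈ Finset.range K, nstep μ n 0 x
      ≤ ∑' n : ℕ, nstep μ n (0:G) 0 := by
    intro K
    calc ∑ n ∈ Finset.range K, nstep μ n 0 x
        ≤ ∑ n ∈ Finset.range K, ∑ m ∈ Finset.range n,
            exitAt μ ({x}ᶜ : Set G) m 0 x * nstep μ (n - 1 - m) x x :=
          Finset.sum_le_sum fun n _ => hfx n
      _ ≤ (∑ m ∈ Finset.range K, exitAt μ ({x}ᶜ : Set G) m 0 x)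
            * (∑ j ∈ Finset.range K, nstep μ j x x) := sum_conv_le' _ _ K
      _ ≤ 1 * ∑' n : ℕ, nstep μ n (0:G) 0 := by
          refine mul_le_mul' ?_ ?_
          · refine le_trans (ENNReal.sum_le_tsum _) ?_
            refine le_trans (le_of_eq (tsum_congr fun m =>
              (exitStep_eq_exitAt_pt μ x m 0).symm)) ?_
            exact sum_exitStep_le_one μ ({x}ᶜ : Set G) hprob 0
          · refine le_trans (ENNReal.sum_le_tsum _) (le_of_eq ?_)
            refine tsum_congr fun j => ?_
            have := nstep_translate μ hprob x j 0 0
            rw [zero_add] at this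
            exact this
      _ = ∑' n : ℕ, nstep μ n (0:G) 0 := one_mul _
  rw [ENNReal.tsum_eq_iSup_nat]
  exact iSup_le hK

omit hprob in
theorem first_return_le (n : ℕ) :
    nstep μ (n+1) (0:G) 0
      ≤ ∑ m ∈ Finset.range (n+1), exitAt μ ({0}ᶜ : Set G) m 0 0 * nstep μ (n - m) 0 0 := by
  have h := nstep_le_fp μ ({0}ᶜ : Set G) (n+1) 0 0
  rw [nstepK_compl_self μ] at h
  rw [zero_add] at h
  refine le_trans h (le_of_eq ?_)
  refine Finset.sum_congr rfl fun m hm => ?_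
  rw [tsum_eq_single (0:G)]
  · rw [show n + 1 - 1 - m = n - m by omega]
  · intro u hu
    have hz : exitAt μ ({0}ᶜ : Set G) m 0 u = 0 :=
      Set.indicator_of_notMem (by simpa using hu) _
    rw [hz, zero_mul]

theorem return_prob_one (hGtop : (∑' n : ℕ, nstep μ n (0:G) 0) = ⊤) :
    ∑' k : ℕ, exitAt μ ({0}ᶜ : Set G) k (0:G) 0 = 1 := by
  set R := ∑' k : ℕ, exitAt μ ({0}ᶜ : Set G) k (0:G) 0 with hR
  have hRle : R ≤ 1 := by
    rw [hR]
    refine le_trans (le_of_eq (tsum_congr fun k => (exitStep_eq_exitAt_zero μ k 0).symm)) ?_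
    exact sum_exitStep_le_one μ ({0}ᶜ : Set G) hprob 0
  rcases eq_or_lt_of_le hRle with he | hl
  · exact he
  · exfalso
    -- partial sums of green are uniformly bounded, contradicting hGtop
    set r := R.toReal with hr
    have hRtop : R ≠ ⊤ := ne_top_of_lt hl
    have hrlt : r < 1 := by
      rw [hr, ← ENNReal.toReal_one]
      exact ENNReal.toReal_strict_mono ENNReal.one_ne_top hl
    have hrnn : 0 ≤ r := ENNReal.toReal_nonneg
    have hbound : ∀ K : ℕ, ∑ n ∈ Finset.range K, nstep μ n (0:G) 0
        ≤ ENNReal.ofReal (1 / (1 - r)) := by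
      intro K
      set GN := ∑ n ∈ Finset.range K, nstep μ n (0:G) 0 with hGN
      have hGNle : GN ≤ 1 + R * GN := by
        rcases K with _ | K
        · simp [hGN]
        · have h1 : GN = (∑ i ∈ Finset.range K, nstep μ (i+1) (0:G) 0) + 1 := by
            rw [hGN, Finset.sum_range_succ']
            simp [nstep]
          nth_rewrite 1 [h1]
          rw [add_comm]
          apply add_le_add_right
          calc ∑ i ∈ Finset.range K, nstep μ (i+1) (0:G) 0
              ≤ ∑ i ∈ Finset.range K, ∑ m ∈ Finset.range (i+1),
                  exitAt μ ({0}ᶜ : Set G) m 0 0 * nstep μ (i - m) 0 0 :=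
                Finset.sum_le_sum fun i _ => first_return_le μ i
            _ ≤ (∑ m ∈ Finset.range K, exitAt μ ({0}ᶜ : Set G) m 0 0)
                  * (∑ j ∈ Finset.range K, nstep μ j (0:G) 0) :=
                sum_conv_le _ _ K
            _ ≤ R * GN := by
                rw [hGN]
                refine mul_le_mul' (ENNReal.sum_le_tsum _) ?_
                exact Finset.sum_le_sum_of_subset (Finset.range_subset_range.2 (by omega))
      have hGNne : GN ≠ ⊤ := by
        refine ne_top_of_le_ne_top (by simp : (K : ℝ≥0∞) ≠ ⊤) ?_
        calc GN ≤ ∑ n ∈ Finset.range K, 1 :=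
              Finset.sum_le_sum fun n _ => nstep_le_one μ hprob n 0 0
          _ = (K : ℝ≥0∞) := by simp
      -- pass to reals
      set g := GN.toReal with hg
      have hgle : g ≤ 1 + r * g := by
        have := ENNReal.toReal_mono (by
          refine ENNReal.add_ne_top.2 ⟨ENNReal.one_ne_top, ?_⟩
          exact ENNReal.mul_ne_top hRtop hGNne) hGNle
        rwa [ENNReal.toReal_add ENNReal.one_ne_top (ENNReal.mul_ne_top hRtop hGNne),
          ENNReal.toReal_mul, ENNReal.toReal_one] at this
      have hgle2 : g ≤ 1 / (1 - r) := by
        rw [le_div_iff₀ (by linarith)]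
        nlinarith
      calc GN = ENNReal.ofReal g := by rw [hg, ENNReal.ofReal_toReal hGNne]
        _ ≤ ENNReal.ofReal (1 / (1 - r)) := ENNReal.ofReal_le_ofReal hgle2
    have : (∑' n : ℕ, nstep μ n (0:G) 0) ≤ ENNReal.ofReal (1 / (1 - r)) := by
      rw [ENNReal.tsum_eq_iSup_nat]
      exact iSup_le hbound
    rw [hGtop] at this
    exact absurd (lt_of_le_of_lt this ENNReal.ofReal_lt_top) (lt_irrefl ⊤)

end Renewal


section HitOne

theorem tsum_split (f : ℕ → ℝ≥0∞) (n : ℕ) :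
    ∑' k : ℕ, f k = ∑ i ∈ Finset.range n, f i + ∑' k : ℕ, f (k + n) := by
  induction n with
  | zero => simp
  | succ n ih =>
      rw [ih, Finset.sum_range_succ]
      have h : ∑' k : ℕ, f (k + n) = f n + ∑' k : ℕ, f (k + (n+1)) := by
        rw [tsum_eq_zero_add' ENNReal.summable]
        simp only [zero_add]
        congr 1
        exact tsum_congr fun k => by rw [show k + 1 + n = k + (n+1) by omega]
      rw [h, add_assoc]

variable (hprob : ∑' x : G, μ x = 1)
include hprob

/-- probability of ever hitting 0 (at time ≥ 1) from z -/
noncomputable def hit0 (z : G) : ℝ≥0∞ := ∑' k : ℕ, exitAt μ ({0}ᶜ : Set G) k z 0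

omit hprob in
theorem hit0_tail (n : ℕ) (z : G) :
    ∑' k : ℕ, exitAt μ ({0}ᶜ : Set G) (k + n) z 0
      = ∑' w : G, nstepK μ ({0}ᶜ : Set G) n z w * hit0 μ w := by
  calc ∑' k : ℕ, exitAt μ ({0}ᶜ : Set G) (k + n) z 0
      = ∑' k : ℕ, ∑' w : G, nstepK μ ({0}ᶜ : Set G) n z w * exitAt μ ({0}ᶜ : Set G) k w 0 := by
        congr 1; ext k
        rw [show k + n = n + k by omega, exitAt_add]
    _ = ∑' w : G, ∑' k : ℕ, nstepK μ ({0}ᶜ : Set G) n z w * exitAt μ ({0}ᶜ : Set G) k w 0 :=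
        ENNReal.tsum_comm
    _ = ∑' w : G, nstepK μ ({0}ᶜ : Set G) n z w * hit0 μ w := by
        congr 1; ext w
        rw [ENNReal.tsum_mul_left]
        rfl

theorem hit0_le_one (z : G) : hit0 μ z ≤ 1 := by
  unfold hit0
  refine le_trans (le_of_eq (tsum_congr fun k => (exitStep_eq_exitAt_zero μ k z).symm)) ?_
  exact sum_exitStep_le_one μ ({0}ᶜ : Set G) hprob z

theorem hit0_eq_one (hirr : ∀ z z' : G, ∃ n : ℕ, 0 < nstep μ n z z')
    (hGtop : (∑' n : ℕ, nstep μ n (0:G) 0) = ⊤) (x : G) : hit0 μ x = 1 := by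
  have hret : hit0 μ 0 = 1 := return_prob_one μ hprob hGtop
  rcases Classical.em (x = 0) with rfl | hx
  · exact hret
  obtain ⟨n, hn⟩ := hit_pos μ hirr hx
  -- key : sum over w of nstepK n 0 w * hit0 w = massK n 0
  have hsplit := tsum_split (fun k => exitAt μ ({0}ᶜ : Set G) k (0:G) 0) n
  have hpartial : ∑ i ∈ Finset.range n, exitAt μ ({0}ᶜ : Set G) i (0:G) 0
      = ∑ i ∈ Finset.range n, exitStep μ ({0}ᶜ : Set G) i (0:G) := by
    exact Finset.sum_congr rfl fun i _ => (exitStep_eq_exitAt_zero μ i 0).symm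
  have hmass := massK_add_exit μ ({0}ᶜ : Set G) hprob n (0:G)
  have hfin : ∑ i ∈ Finset.range n, exitStep μ ({0}ᶜ : Set G) i (0:G) ≠ ⊤ := by
    refine ne_top_of_le_ne_top ENNReal.one_ne_top ?_
    exact le_of_le_of_eq (le_add_left le_rfl) hmass
  have key : ∑' w : G, nstepK μ ({0}ᶜ : Set G) n 0 w * hit0 μ w
      = massK μ ({0}ᶜ : Set G) n 0 := by
    have h1 : (1:ℝ≥0∞) = ∑ i ∈ Finset.range n, exitStep μ ({0}ᶜ : Set G) i (0:G)
        + ∑' w : G, nstepK μ ({0}ᶜ : Set G) n 0 w * hit0 μ w := by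
      rw [← hret]
      show hit0 μ 0 = _
      unfold hit0
      rw [hsplit, hpartial, hit0_tail]
      rfl
    have h2 : (1:ℝ≥0∞) = ∑ i ∈ Finset.range n, exitStep μ ({0}ᶜ : Set G) i (0:G)
        + massK μ ({0}ᶜ : Set G) n 0 := by
      rw [← hmass]; ring
    rw [h1] at h2
    exact (ENNReal.add_right_inj hfin).1 h2
  -- now deduce hit0 w = 1 whenever nstepK n 0 w > 0
  set a : G → ℝ≥0∞ := fun w => nstepK μ ({0}ᶜ : Set G) n 0 w with ha
  have hmassfin : massK μ ({0}ᶜ : Set G) n 0 ≠ ⊤ :=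
    ne_top_of_le_ne_top ENNReal.one_ne_top (massK_le_one μ _ hprob n 0)
  have hzero : ∑' w : G, a w * (1 - hit0 μ w) = 0 := by
    have hdecomp : massK μ ({0}ᶜ : Set G) n 0
        = ∑' w : G, nstepK μ ({0}ᶜ : Set G) n 0 w * hit0 μ w
          + ∑' w : G, a w * (1 - hit0 μ w) := by
      rw [← ENNReal.tsum_add]
      unfold massK
      congr 1; ext w
      rw [← mul_add, add_tsub_cancel_of_le (hit0_le_one μ hprob w), mul_one]
    rw [key] at hdecomp
    have := (ENNReal.add_right_inj hmassfin).1
      (by rw [← hdecomp, add_zero] : massK μ ({0}ᶜ : Set G) n 0 + ∑' w : G, a w * (1 - hit0 μ w)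
        = massK μ ({0}ᶜ : Set G) n 0 + 0)
    exact this
  have hx1 : a x * (1 - hit0 μ x) = 0 := by
    have := ENNReal.tsum_eq_zero.1 hzero x
    exact this
  rcases mul_eq_zero.1 hx1 with h | h
  · exact absurd h (ne_of_gt hn)
  · have : (1:ℝ≥0∞) ≤ hit0 μ x := tsub_eq_zero_iff_le.1 h
    exact le_antisymm (hit0_le_one μ hprob x) this

end HitOne


section Zwalk
variable (ν : ℤ → ℝ≥0∞) (hprob : ∑' x : ℤ, ν x = 1)

noncomputable def sig2 : ℝ≥0∞ := ∑' x : ℤ, ν x * ENNReal.ofReal ((x:ℝ)^2)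

theorem nstep_mass {G : Type*} [AddCommGroup G] (μ : G → ℝ≥0∞) (hp : ∑' x : G, μ x = 1)
    (n : ℕ) (z : G) :
    ∑' x : G, nstep μ n z x = 1 := by
  have h := massK_add_exit μ Set.univ hp n z
  have hz : ∀ k, exitStep μ Set.univ k z = 0 := by
    intro k
    unfold exitStep
    simp [Set.compl_univ]
  simp only [hz, Finset.sum_const_zero, add_zero] at h
  rw [← h]
  unfold massK
  exact tsum_congr fun x => by rw [nstep_eq_nstepK_univ]

include hprob

theorem nu_ne_top (x : ℤ) : ν x ≠ ⊤ :=
  ne_top_of_le_ne_top ENNReal.one_ne_top (le_of_le_of_eq (ENNReal.le_tsum x) hprob)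

theorem nur_summable : Summable (fun x : ℤ => (ν x).toReal) :=
  ENNReal.summable_toReal (by rw [hprob]; exact ENNReal.one_ne_top)

theorem nur_tsum : ∑' x : ℤ, (ν x).toReal = 1 := by
  rw [← ENNReal.tsum_toReal_eq (nu_ne_top ν hprob), hprob, ENNReal.toReal_one]

variable (hvar : (∑' x : ℤ, ν x * ENNReal.ofReal ((x:ℝ)^2)) < ⊤)
include hvar

theorem nursq_summable : Summable (fun x : ℤ => (ν x).toReal * (x:ℝ)^2) := by
  have h : ∀ x : ℤ, (ν x * ENNReal.ofReal ((x:ℝ)^2)).toReal = (ν x).toReal * (x:ℝ)^2 := by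
    intro x
    rw [ENNReal.toReal_mul, ENNReal.toReal_ofReal (sq_nonneg _)]
  have := ENNReal.summable_toReal (ne_of_lt hvar)
  simpa [h] using this

theorem nursq_tsum : ∑' x : ℤ, (ν x).toReal * (x:ℝ)^2 = (sig2 ν).toReal := by
  unfold sig2
  rw [ENNReal.tsum_toReal_eq (fun x => ENNReal.mul_ne_top (nu_ne_top ν hprob x)
    ENNReal.ofReal_ne_top)]
  exact tsum_congr fun x => by rw [ENNReal.toReal_mul, ENNReal.toReal_ofReal (sq_nonneg _)]

theorem nurabs_summable : Summable (fun x : ℤ => (ν x).toReal * |(x:ℝ)|) := by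
  refine Summable.of_nonneg_of_le (fun x => by positivity)
    (fun x => ?_) ((nur_summable ν hprob).add (nursq_summable ν hprob hvar))
  have habs : |(x:ℝ)| ≤ 1 + (x:ℝ)^2 := by nlinarith [abs_nonneg (x:ℝ), sq_abs (x:ℝ)]
  calc (ν x).toReal * |(x:ℝ)| ≤ (ν x).toReal * (1 + (x:ℝ)^2) :=
        mul_le_mul_of_nonneg_left habs ENNReal.toReal_nonneg
    _ = (ν x).toReal + (ν x).toReal * (x:ℝ)^2 := by ring

theorem nurmul_summable : Summable (fun x : ℤ => (ν x).toReal * (x:ℝ)) := by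
  apply Summable.of_abs
  have : ∀ x : ℤ, |(ν x).toReal * (x:ℝ)| = (ν x).toReal * |(x:ℝ)| := by
    intro x
    rw [abs_mul, abs_of_nonneg ENNReal.toReal_nonneg]
  simpa [this] using nurabs_summable ν hprob hvar
variable (hmean : ∑' x : ℤ, (x : ℝ) * (ν x).toReal = 0)
include hmean

theorem mean0 : ∑' x : ℤ, (ν x).toReal * (x:ℝ) = 0 := by
  rw [← hmean]
  exact tsum_congr fun x => mul_comm _ _

theorem inner_I (v : ℤ) :
    (∑' w : ℤ, ν w * ENNReal.ofReal (((v:ℝ) + (w:ℝ))^2))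
      = ENNReal.ofReal ((v:ℝ)^2 + (sig2 ν).toReal) := by
  have hg_nonneg : ∀ w : ℤ, 0 ≤ (ν w).toReal * ((v:ℝ) + (w:ℝ))^2 :=
    fun w => mul_nonneg ENNReal.toReal_nonneg (sq_nonneg _)
  have hsq : ∀ w : ℤ, (ν w).toReal * ((v:ℝ) + (w:ℝ))^2
      = (ν w).toReal * (v:ℝ)^2 + (2*(v:ℝ)) * ((ν w).toReal * (w:ℝ))
        + (ν w).toReal * (w:ℝ)^2 := by
    intro w; ring
  have hs1 : Summable (fun w : ℤ => (ν w).toReal * (v:ℝ)^2) :=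
    (nur_summable ν hprob).mul_right _
  have hs2 : Summable (fun w : ℤ => (2*(v:ℝ)) * ((ν w).toReal * (w:ℝ))) :=
    (nurmul_summable ν hprob hvar).mul_left _
  have hs3 : Summable (fun w : ℤ => (ν w).toReal * (w:ℝ)^2) := nursq_summable ν hprob hvar
  have hgsum : Summable (fun w : ℤ => (ν w).toReal * ((v:ℝ) + (w:ℝ))^2) := by
    have := (hs1.add hs2).add hs3
    refine this.congr fun w => ?_
    rw [← hsq]
  have htsum : ∑' w : ℤ, (ν w).toReal * ((v:ℝ) + (w:ℝ))^2
      = (v:ℝ)^2 + (sig2 ν).toReal := by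
    calc ∑' w : ℤ, (ν w).toReal * ((v:ℝ) + (w:ℝ))^2
        = ∑' w : ℤ, ((ν w).toReal * (v:ℝ)^2 + (2*(v:ℝ)) * ((ν w).toReal * (w:ℝ))
            + (ν w).toReal * (w:ℝ)^2) := tsum_congr hsq
      _ = (∑' w : ℤ, (ν w).toReal * (v:ℝ)^2)
            + (∑' w : ℤ, (2*(v:ℝ)) * ((ν w).toReal * (w:ℝ)))
            + ∑' w : ℤ, (ν w).toReal * (w:ℝ)^2 := by
          rw [Summable.tsum_add (hs1.add hs2) hs3, Summable.tsum_add hs1 hs2]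
      _ = (v:ℝ)^2 + (sig2 ν).toReal := by
          rw [tsum_mul_right, nur_tsum ν hprob, tsum_mul_left,
            mean0 ν hprob hvar hmean, nursq_tsum ν hprob hvar]
          ring
  calc (∑' w : ℤ, ν w * ENNReal.ofReal (((v:ℝ) + (w:ℝ))^2))
      = ∑' w : ℤ, ENNReal.ofReal ((ν w).toReal * ((v:ℝ) + (w:ℝ))^2) := by
        refine tsum_congr fun w => ?_
        rw [ENNReal.ofReal_mul ENNReal.toReal_nonneg, ENNReal.ofReal_toReal (nu_ne_top ν hprob w)]
    _ = ENNReal.ofReal (∑' w : ℤ, (ν w).toReal * ((v:ℝ) + (w:ℝ))^2) :=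
        (ENNReal.ofReal_tsum_of_nonneg hg_nonneg hgsum).symm
    _ = ENNReal.ofReal ((v:ℝ)^2 + (sig2 ν).toReal) := by rw [htsum]

theorem s2_eq (n : ℕ) :
    ∑' x : ℤ, nstep ν n 0 x * ENNReal.ofReal ((x:ℝ)^2) = (n : ℝ≥0∞) * sig2 ν := by
  induction n with
  | zero =>
      rw [tsum_eq_single 0]
      · simp [nstep]
      · intro x hx; simp [nstep, hx]
  | succ n ih =>
      have hstep : ∀ x : ℤ, nstep ν (n+1) 0 x = ∑' v : ℤ, nstep ν n 0 v * ν (x - v) := fun x => rfl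
      calc ∑' x : ℤ, nstep ν (n+1) 0 x * ENNReal.ofReal ((x:ℝ)^2)
          = ∑' x : ℤ, ∑' v : ℤ, nstep ν n 0 v * ν (x - v) * ENNReal.ofReal ((x:ℝ)^2) := by
            refine tsum_congr fun x => ?_
            rw [hstep, ENNReal.tsum_mul_right]
        _ = ∑' v : ℤ, ∑' x : ℤ, nstep ν n 0 v * ν (x - v) * ENNReal.ofReal ((x:ℝ)^2) :=
            ENNReal.tsum_comm
        _ = ∑' v : ℤ, nstep ν n 0 v * ∑' w : ℤ, ν w * ENNReal.ofReal (((v:ℝ) + (w:ℝ))^2) := by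
            refine tsum_congr fun v => ?_
            rw [← (Equiv.addRight v).tsum_eq
              (fun x => nstep ν n 0 v * ν (x - v) * ENNReal.ofReal ((x:ℝ)^2)),
              ← ENNReal.tsum_mul_left]
            refine tsum_congr fun w => ?_
            simp only [Equiv.coe_addRight, add_sub_cancel_right]
            rw [mul_assoc]
            congr 2
            push_cast
            ring
        _ = ∑' v : ℤ, nstep ν n 0 v * ENNReal.ofReal ((v:ℝ)^2 + (sig2 ν).toReal) := by
            refine tsum_congr fun v => ?_
            rw [inner_I ν hprob hvar hmean]
        _ = (∑' v : ℤ, nstep ν n 0 v * ENNReal.ofReal ((v:ℝ)^2))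
              + (∑' v : ℤ, nstep ν n 0 v) * ENNReal.ofReal ((sig2 ν).toReal) := by
            rw [← ENNReal.tsum_mul_right, ← ENNReal.tsum_add]
            refine tsum_congr fun v => ?_
            rw [ENNReal.ofReal_add (sq_nonneg _) ENNReal.toReal_nonneg, mul_add]
        _ = ((n:ℝ≥0∞) + 1) * sig2 ν := by
            have hne : sig2 ν ≠ ⊤ := by unfold sig2; exact ne_of_lt hvar
            rw [ih, nstep_mass ν hprob, one_mul, ENNReal.ofReal_toReal hne]
            ring
        _ = ((n+1 : ℕ) : ℝ≥0∞) * sig2 ν := by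
            push_cast
            ring

noncomputable def Pgood (n : ℕ) (a : ℕ) : ℝ≥0∞ :=
  ∑' x : ℤ, (if |x| ≤ (a:ℤ) then nstep ν n 0 x else 0)

noncomputable def Pbad (n : ℕ) (a : ℕ) : ℝ≥0∞ :=
  ∑' x : ℤ, (if (a:ℤ) < |x| then nstep ν n 0 x else 0)

omit hvar hmean in
theorem Pgood_add_Pbad (n : ℕ) (a : ℕ) : Pgood ν n a + Pbad ν n a = 1 := by
  unfold Pgood Pbad
  rw [← ENNReal.tsum_add, ← nstep_mass ν hprob n 0]
  refine tsum_congr fun x => ?_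
  rcases le_or_gt (|x|) (a:ℤ) with h | h
  · rw [if_pos h, if_neg (not_lt.2 h), add_zero]
  · rw [if_neg (not_le.2 h), if_pos h, zero_add]

theorem Pbad_le_half (n : ℕ) (a : ℕ)
    (ha : 2*(n:ℝ)*(sig2 ν).toReal + 1 ≤ (a:ℝ)^2) :
    Pbad ν n a ≤ ENNReal.ofReal (1/2) := by
  set s := (sig2 ν).toReal with hs
  have hsnn : 0 ≤ s := ENNReal.toReal_nonneg
  have hcheb : ENNReal.ofReal ((a:ℝ)^2) * Pbad ν n a ≤ (n : ℝ≥0∞) * sig2 ν := by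
    rw [← s2_eq ν hprob hvar hmean n]
    unfold Pbad
    rw [← ENNReal.tsum_mul_left]
    refine ENNReal.tsum_le_tsum fun x => ?_
    rcases Classical.em ((a:ℤ) < |x|) with h | h
    · rw [if_pos h, mul_comm]
      refine mul_le_mul_right (ENNReal.ofReal_le_ofReal ?_) _
      have h1 : (a:ℝ) ≤ |(x:ℝ)| := by
        have : ((a:ℤ):ℝ) ≤ (|x| : ℤ) := by exact_mod_cast le_of_lt h
        simpa [Int.cast_abs] using this
      calc (a:ℝ)^2 ≤ |(x:ℝ)|^2 := by
            refine pow_le_pow_left₀ (by positivity) h1 2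
        _ = (x:ℝ)^2 := sq_abs _
    · rw [if_neg h, mul_zero]
      exact zero_le
  have hfin : Pbad ν n a ≤ 1 := by
    rw [← Pgood_add_Pbad ν hprob n a]
    exact le_add_self
  have hbne : Pbad ν n a ≠ ⊤ := ne_top_of_le_ne_top ENNReal.one_ne_top hfin
  set pb := (Pbad ν n a).toReal with hpb
  have hpbnn : 0 ≤ pb := ENNReal.toReal_nonneg
  have hreal : (a:ℝ)^2 * pb ≤ (n:ℝ) * s := by
    have hrhs : (n : ℝ≥0∞) * sig2 ν ≠ ⊤ := by
      refine ENNReal.mul_ne_top (by simp) ?_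
      unfold sig2
      exact ne_of_lt hvar
    have := ENNReal.toReal_mono hrhs hcheb
    rw [ENNReal.toReal_mul, ENNReal.toReal_mul, ENNReal.toReal_ofReal (sq_nonneg _),
      ENNReal.toReal_natCast] at this
    rw [hs, hpb]
    exact this
  have hpbhalf : pb ≤ 1/2 := by nlinarith
  calc Pbad ν n a = ENNReal.ofReal pb := by rw [hpb, ENNReal.ofReal_toReal hbne]
    _ ≤ ENNReal.ofReal (1/2) := ENNReal.ofReal_le_ofReal hpbhalf

theorem Pgood_ge_half (n : ℕ) (a : ℕ)
    (ha : 2*(n:ℝ)*(sig2 ν).toReal + 1 ≤ (a:ℝ)^2) :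
    ENNReal.ofReal (1/2) ≤ Pgood ν n a := by
  by_contra hc
  push_neg at hc
  have h1 := Pgood_add_Pbad ν hprob n a
  have h2 : Pgood ν n a + Pbad ν n a < 1 := by
    calc Pgood ν n a + Pbad ν n a
        < ENNReal.ofReal (1/2) + ENNReal.ofReal (1/2) := by
          refine ENNReal.add_lt_add_of_lt_of_le ?_ hc (Pbad_le_half ν hprob hvar hmean n a ha)
          refine ne_top_of_le_ne_top ENNReal.one_ne_top ?_
          rw [← h1]
          exact le_add_self
      _ = 1 := by
          rw [← ENNReal.ofReal_add (by norm_num) (by norm_num)]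
          norm_num
  rw [h1] at h2
  exact lt_irrefl 1 h2

theorem green_zero_top : (∑' n : ℕ, nstep ν n (0:ℤ) 0) = ⊤ := by
  by_contra hfin
  set GZ := ∑' n : ℕ, nstep ν n (0:ℤ) 0 with hGZ
  set g := GZ.toReal with hg
  have hg1 : 1 ≤ g := by
    have h0 : (1:ℝ≥0∞) ≤ GZ := by
      rw [hGZ]
      refine le_trans ?_ (ENNReal.le_tsum 0)
      simp [nstep]
    rw [hg, ← ENNReal.toReal_one]
    exact ENNReal.toReal_mono hfin h0
  set s := (sig2 ν).toReal with hs
  have hsnn : 0 ≤ s := ENNReal.toReal_nonneg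
  set b := Real.sqrt (2*s+1) with hb
  have hb1 : 1 ≤ b := by
    have h := Real.sqrt_le_sqrt (show (1:ℝ) ≤ 2*s+1 by linarith)
    rwa [Real.sqrt_one] at h
  -- main inequality for every N
  have hmain : ∀ N : ℕ, Real.sqrt ((N:ℝ)+1) ≤ 10 * b * g := by
    intro N
    set a : ℕ := ⌈Real.sqrt (2*(N:ℝ)*s+1)⌉₊ with hadef
    have hsqrtnn : 0 ≤ Real.sqrt (2*(N:ℝ)*s+1) := Real.sqrt_nonneg _
    have haa : Real.sqrt (2*(N:ℝ)*s+1) ≤ (a:ℝ) := Nat.le_ceil _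
    have ha2 : 2*(N:ℝ)*s + 1 ≤ (a:ℝ)^2 := by
      calc 2*(N:ℝ)*s + 1 = Real.sqrt (2*(N:ℝ)*s+1)^2 := by
            rw [Real.sq_sqrt (by positivity)]
        _ ≤ (a:ℝ)^2 := pow_le_pow_left₀ hsqrtnn haa 2
    -- each n ≤ N good
    have hgood : ∀ n ∈ Finset.range (N+1), ENNReal.ofReal (1/2) ≤ Pgood ν n a := by
      intro n hn
      refine Pgood_ge_half ν hprob hvar hmean n a ?_
      have hnN : (n:ℝ) ≤ (N:ℝ) := by
        exact_mod_cast Nat.le_of_lt_succ (Finset.mem_range.1 hn)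
      nlinarith
    -- Pgood ≤ finite sum over the interval
    have hPgood_le : ∀ n : ℕ, Pgood ν n a
        ≤ ∑ x ∈ Finset.Icc (-(a:ℤ)) (a:ℤ), nstep ν n 0 x := by
      intro n
      unfold Pgood
      rw [tsum_eq_sum (s := Finset.Icc (-(a:ℤ)) (a:ℤ)) ?_]
      · refine Finset.sum_le_sum fun x _ => ?_
        split_ifs
        · exact le_rfl
        · exact zero_le
      · intro x hx
        rw [if_neg]
        intro habs
        exact hx (Finset.mem_Icc.2 (abs_le.1 habs))
    -- assemble
    have hupper : ((N:ℝ≥0∞)+1) * ENNReal.ofReal (1/2)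
        ≤ ((2*a+1 : ℕ) : ℝ≥0∞) * GZ := by
      calc ((N:ℝ≥0∞)+1) * ENNReal.ofReal (1/2)
          = ∑ n ∈ Finset.range (N+1), ENNReal.ofReal (1/2) := by
            rw [Finset.sum_const, Finset.card_range]
            rw [nsmul_eq_mul]
            push_cast
            ring
        _ ≤ ∑ n ∈ Finset.range (N+1), Pgood ν n a := Finset.sum_le_sum hgood
        _ ≤ ∑ n ∈ Finset.range (N+1), ∑ x ∈ Finset.Icc (-(a:ℤ)) (a:ℤ), nstep ν n 0 x :=
            Finset.sum_le_sum fun n _ => hPgood_le n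
        _ = ∑ x ∈ Finset.Icc (-(a:ℤ)) (a:ℤ), ∑ n ∈ Finset.range (N+1), nstep ν n 0 x :=
            Finset.sum_comm
        _ ≤ ∑ x ∈ Finset.Icc (-(a:ℤ)) (a:ℤ), GZ := by
            refine Finset.sum_le_sum fun x _ => ?_
            refine le_trans (ENNReal.sum_le_tsum _) ?_
            rw [hGZ]
            exact green_le_green_zero ν hprob x
        _ = ((2*a+1 : ℕ) : ℝ≥0∞) * GZ := by
            rw [Finset.sum_const, nsmul_eq_mul]
            congr 2
            rw [Int.card_Icc]
            simp
            omega
    -- to reals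
    have hreal : ((N:ℝ)+1) * (1/2) ≤ (2*(a:ℝ)+1) * g := by
      have hrhs_ne : ((2*a+1 : ℕ) : ℝ≥0∞) * GZ ≠ ⊤ := ENNReal.mul_ne_top (ENNReal.natCast_ne_top _) hfin
      have := ENNReal.toReal_mono hrhs_ne hupper
      rw [ENNReal.toReal_mul, ENNReal.toReal_mul, ENNReal.toReal_ofReal (by norm_num),
        ENNReal.toReal_natCast] at this
      have hcast : ((N:ℝ≥0∞)+1).toReal = (N:ℝ)+1 := by
        rw [ENNReal.toReal_add (by simp) ENNReal.one_ne_top]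
        simp
      rw [hcast] at this
      push_cast at this ⊢
      linarith
    -- bound a
    have ha_ub : (a:ℝ) ≤ b * Real.sqrt ((N:ℝ)+1) + 1 := by
      have h1 : (a:ℝ) < Real.sqrt (2*(N:ℝ)*s+1) + 1 := Nat.ceil_lt_add_one hsqrtnn
      have h2 : Real.sqrt (2*(N:ℝ)*s+1) ≤ b * Real.sqrt ((N:ℝ)+1) := by
        rw [hb, ← Real.sqrt_mul (by linarith)]
        refine Real.sqrt_le_sqrt ?_
        have hN0 : (0:ℝ) ≤ N := Nat.cast_nonneg N
        nlinarith
      linarith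
    set r := Real.sqrt ((N:ℝ)+1) with hr
    have hr1 : 1 ≤ r := by
      have h := Real.sqrt_le_sqrt (show (1:ℝ) ≤ (N:ℝ)+1 by have := (Nat.cast_nonneg N : (0:ℝ) ≤ N); linarith)
      rw [Real.sqrt_one] at h
      exact h
    have hr2 : r^2 = (N:ℝ)+1 := Real.sq_sqrt (by have := (Nat.cast_nonneg N : (0:ℝ) ≤ N); linarith)
    have hfinal : r^2 * (1/2) ≤ 5 * b * r * g := by
      calc r^2 * (1/2) = ((N:ℝ)+1) * (1/2) := by rw [hr2]
        _ ≤ (2*(a:ℝ)+1) * g := hreal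
        _ ≤ (2*(b*r+1)+1) * g := by
            have hgnn : (0:ℝ) ≤ g := by linarith
            nlinarith [mul_nonneg (sub_nonneg.2 ha_ub) hgnn]
        _ ≤ 5 * b * r * g := by
            have hbr : (1:ℝ) ≤ b * r := le_trans hb1 (by nlinarith)
            nlinarith [mul_nonneg (sub_nonneg.2 hbr) (show (0:ℝ) ≤ g by linarith)]
    have hrpos : 0 < r := by linarith
    nlinarith
  -- contradiction
  set C := 10 * b * g with hC
  have hCpos : 0 < C := by positivity
  have := hmain (⌈C^2⌉₊)
  have hNC : C^2 < (⌈C^2⌉₊:ℝ) + 1 := by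
    have := Nat.le_ceil (C^2)
    linarith
  have hlt : C < Real.sqrt ((⌈C^2⌉₊:ℝ)+1) := by
    have h1 : Real.sqrt (C^2) < Real.sqrt ((⌈C^2⌉₊:ℝ)+1) := Real.sqrt_lt_sqrt (by positivity) hNC
    rwa [Real.sqrt_sq hCpos.le] at h1
  linarith [hmain (⌈C^2⌉₊)]

end Zwalk


section Union
variable {BB : ℕ → Set G}

theorem indicator_iSup (hmono : Monotone BB) {g : ℕ → G → ℝ≥0∞}
    (hg : Monotone g) (z' : G) :
    (⋃ n, BB n).indicator (fun u => ⨆ n, g n u) z' = ⨆ n, (BB n).indicator (g n) z' := by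
  rcases Classical.em (z' ∈ ⋃ n, BB n) with h | h
  · obtain ⟨m, hm⟩ := Set.mem_iUnion.1 h
    rw [Set.indicator_of_mem h]
    apply le_antisymm
    · refine iSup_le fun n => ?_
      calc g n z' ≤ g (max n m) z' := hg (le_max_left n m) z'
        _ = (BB (max n m)).indicator (g (max n m)) z' :=
            (Set.indicator_of_mem (hmono (le_max_right n m) hm) _).symm
        _ ≤ ⨆ k, (BB k).indicator (g k) z' := le_iSup (fun k => (BB k).indicator (g k) z') _
    · refine iSup_le fun n => ?_
      refine le_trans (Set.indicator_le_self _ _ _) ?_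
      exact le_iSup (fun k => g k z') n
  · rw [Set.indicator_of_notMem h]
    symm
    rw [ENNReal.iSup_eq_zero]
    intro n
    exact Set.indicator_of_notMem (fun hn => h (Set.mem_iUnion.2 ⟨n, hn⟩)) _

theorem nstepK_mono_n (hmono : Monotone BB) (k : ℕ) (z : G) :
    Monotone (fun n => fun w => nstepK μ (BB n) k z w) := by
  intro n m h
  intro w
  exact nstepK_mono_set μ _ _ (hmono h) k z w

theorem nstepK_iUnion (hmono : Monotone BB) (k : ℕ) (z z' : G) :
    nstepK μ (⋃ n, BB n) k z z' = ⨆ n, nstepK μ (BB n) k z z' := by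
  induction k generalizing z' with
  | zero =>
      simp only [nstepK_zero]
      exact (ciSup_const).symm
  | succ k ih =>
      simp only [nstepK_succ]
      have hinner : ∀ u : G, ∑' w : G, nstepK μ (⋃ n, BB n) k z w * μ (u - w)
          = ⨆ n, ∑' w : G, nstepK μ (BB n) k z w * μ (u - w) := by
        intro u
        calc ∑' w : G, nstepK μ (⋃ n, BB n) k z w * μ (u - w)
            = ∑' w : G, ⨆ n, nstepK μ (BB n) k z w * μ (u - w) := by
              refine tsum_congr fun w => ?_
              rw [ih, ENNReal.iSup_mul]
          _ = ⨆ n, ∑' w : G, nstepK μ (BB n) k z w * μ (u - w) := by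
              refine tsum_iSup_mono _ ?_
              intro n m h w
              exact mul_le_mul_left (nstepK_mono_n μ hmono k z h w) _
      have heq : (fun u => ∑' w : G, nstepK μ (⋃ n, BB n) k z w * μ (u - w))
          = fun u => ⨆ n, (fun n u => ∑' w : G, nstepK μ (BB n) k z w * μ (u - w)) n u :=
        funext hinner
      rw [heq]
      refine indicator_iSup hmono ?_ z'
      intro n m h u
      refine ENNReal.tsum_le_tsum fun w => ?_
      exact mul_le_mul_left (nstepK_mono_n μ hmono k z h w) _

theorem exitK_iUnion (hmono : Monotone BB) (z w : G) (hw : w ∉ ⋃ n, BB n) :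
    exitK μ (⋃ n, BB n) z w = ⨆ n, exitK μ (BB n) z w := by
  unfold exitK
  rw [Set.indicator_of_mem (Set.mem_compl hw)]
  have hn : ∀ n, w ∈ (BB n)ᶜ := fun n hn => hw (Set.mem_iUnion.2 ⟨n, hn⟩)
  calc ∑' k : ℕ, ∑' v : G, nstepK μ (⋃ n, BB n) k z v * μ (w - v)
      = ∑' k : ℕ, ⨆ n, ∑' v : G, nstepK μ (BB n) k z v * μ (w - v) := by
        refine tsum_congr fun k => ?_
        calc ∑' v : G, nstepK μ (⋃ n, BB n) k z v * μ (w - v)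
            = ∑' v : G, ⨆ n, nstepK μ (BB n) k z v * μ (w - v) := by
              refine tsum_congr fun v => ?_
              rw [nstepK_iUnion μ hmono, ENNReal.iSup_mul]
          _ = ⨆ n, ∑' v : G, nstepK μ (BB n) k z v * μ (w - v) := by
              refine tsum_iSup_mono _ ?_
              intro n m h v
              exact mul_le_mul_left (nstepK_mono_n μ hmono k z h v) _
    _ = ⨆ n, ∑' k : ℕ, ∑' v : G, nstepK μ (BB n) k z v * μ (w - v) := by
        refine tsum_iSup_mono _ ?_
        intro n m h k
        refine ENNReal.tsum_le_tsum fun v => ?_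
        exact mul_le_mul_left (nstepK_mono_n μ hmono _ z h v) _
    _ = ⨆ n, (BB n)ᶜ.indicator (fun u => ∑' k : ℕ, ∑' v : G, nstepK μ (BB n) k z v * μ (u - v)) w := by
        refine iSup_congr fun n => ?_
        rw [Set.indicator_of_mem (hn n)]

theorem exitK_mono_n (hmono : Monotone BB) (z w : G) (hw : w ∉ ⋃ n, BB n) :
    Monotone (fun n => exitK μ (BB n) z w) := by
  intro n m h
  unfold exitK
  have hn' : ∀ k, w ∈ (BB k)ᶜ := fun k hk => hw (Set.mem_iUnion.2 ⟨k, hk⟩)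
  show ((BB n)ᶜ.indicator _ w) ≤ ((BB m)ᶜ.indicator _ w)
  rw [Set.indicator_of_mem (hn' n), Set.indicator_of_mem (hn' m)]
  refine ENNReal.tsum_le_tsum fun k => ENNReal.tsum_le_tsum fun v => ?_
  exact mul_le_mul_left (nstepK_mono_n μ hmono k z h v) _

end Union



end Aux

/-- **Lemma 7.3.**  Let `(ξ(t))` be an irreducible homogeneous random walk on `ℤ` with
zero mean and finite variance, `T₀ = inf{t ≥ 0 : ξ(t) ≤ 0}` and
`T = inf{t ≥ 0 : ξ(t) = ξ(0)+1}`.  Then `P_n(T < T₀) → 1` as `n → ∞`.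
(The event `{T < T₀}` for the walk started at `n` is the event that the first exit
from the set `{x > 0} \ {n+1}` occurs at the point `n+1`.) -/
theorem hit_above_before_zero
    (ν : ℤ → ℝ≥0∞) (hprob : ∑' x : ℤ, ν x = 1)
    (hirr : ∀ x y : ℤ, ∃ n : ℕ, 0 < nstep ν n x y)
    (hmean : ∑' x : ℤ, (x : ℝ) * (ν x).toReal = 0)
    (hvar : (∑' x : ℤ, ν x * ENNReal.ofReal ((x : ℝ) ^ 2)) < ⊤) :
    Tendsto
      (fun n : ℕ =>
        (exitK ν {x : ℤ | 0 < x ∧ x ≠ (n : ℤ) + 1} (n : ℤ) ((n : ℤ) + 1)).toReal)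
      atTop (nhds 1) := by

  classical
  set B : ℕ → Set ℤ := fun n => {y : ℤ | -(n:ℤ) < y ∧ y ≠ 1} with hB
  have hBmono : Monotone B := by
    intro n m h y hy
    simp only [hB, Set.mem_setOf_eq] at hy ⊢
    refine ⟨lt_of_le_of_lt ?_ hy.1, hy.2⟩
    have : (n:ℤ) ≤ (m:ℤ) := by exact_mod_cast h
    omega
  have hstep : ∀ n : ℕ, exitK ν {x : ℤ | 0 < x ∧ x ≠ (n:ℤ)+1} (n:ℤ) ((n:ℤ)+1)
      = exitK ν (B n) 0 1 := by
    intro n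
    have himg : (fun x : ℤ => x + (n:ℤ)) '' (B n) = {x : ℤ | 0 < x ∧ x ≠ (n:ℤ)+1} := by
      ext u
      simp only [Set.mem_image, hB, Set.mem_setOf_eq]
      constructor
      · rintro ⟨y, ⟨h1, h2⟩, rfl⟩
        constructor
        · omega
        · omega
      · rintro ⟨h1, h2⟩
        exact ⟨u - (n:ℤ), ⟨by omega, by omega⟩, by ring⟩
    have ht := exitK_translate ν (B n) ((n:ℤ)) 0 1
    rw [himg, zero_add, show (1:ℤ) + (n:ℤ) = (n:ℤ) + 1 by ring] at ht
    exact ht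
  have hUnion : (⋃ n, B n) = ({1}ᶜ : Set ℤ) := by
    ext y
    simp only [Set.mem_iUnion, hB, Set.mem_setOf_eq, Set.mem_compl_iff, Set.mem_singleton_iff]
    constructor
    · rintro ⟨n, _, h2⟩; exact h2
    · intro h
      exact ⟨y.natAbs + 1, by omega, h⟩
  have h1notin : (1:ℤ) ∉ ⋃ n, B n := by
    rw [hUnion]
    simp
  have hGtop := green_zero_top ν hprob hvar hmean
  have hone : exitK ν ({1}ᶜ : Set ℤ) 0 1 = 1 := by
    have himg : (fun x : ℤ => x + (-1:ℤ)) '' ({1}ᶜ : Set ℤ) = ({0}ᶜ : Set ℤ) := by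
      ext u
      simp only [Set.mem_image, Set.mem_compl_iff, Set.mem_singleton_iff]
      constructor
      · rintro ⟨y, hy, rfl⟩; omega
      · intro h; exact ⟨u + 1, by omega, by ring⟩
    have ht := exitK_translate ν ({1}ᶜ : Set ℤ) (-1 : ℤ) 0 1
    rw [himg] at ht
    rw [← ht]
    have h0 : (0:ℤ) + -1 = -1 := by ring
    have h1 : (1:ℤ) + -1 = 0 := by ring
    rw [h0, h1, exitK_eq_tsum_exitAt]
    exact hit0_eq_one ν hprob hirr hGtop (-1)
  have hsup : (⨆ n, exitK ν (B n) 0 1) = 1 := by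
    rw [← exitK_iUnion ν hBmono 0 1 h1notin, hUnion, hone]
  have hmonoe : Monotone (fun n => exitK ν (B n) 0 1) := exitK_mono_n ν hBmono 0 1 h1notin
  have htend : Tendsto (fun n => exitK ν (B n) 0 1) atTop (nhds (1:ℝ≥0∞)) := by
    rw [← hsup]
    exact tendsto_atTop_iSup hmonoe
  have htoReal := (ENNReal.tendsto_toReal ENNReal.one_ne_top).comp htend
  rw [ENNReal.toReal_one] at htoReal
  refine Tendsto.congr ?_ htoReal
  intro n
  simp only [Function.comp_apply]
  rw [hstep n]


end KRWQ
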